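/- For every i ∈ ℤ, the real floor identity ⌊(√N + P_i)/Q_i⌋ = ⌊(√N + P_{i-1})/Q_i⌋ = b_i holds, where √N is the real square root of N. (Theorem 2 (Riesel), part (i).) -/
import Mathlib

def CFRed (N p q : ℤ) : Prop :=
  0 < q ∧ q ∣ (N - p ^ 2) ∧ (p : ℝ) < Real.sqrt N ∧
    Real.sqrt N < (p : ℝ) + q ∧ (q : ℝ) - p < Real.sqrt N

lemma floor_div_int_eq_fdiv (y : ℝ) (q : ℤ) (hq : 0 < q) :
    ⌊y / (q : ℝ)⌋ = Int.fdiv ⌊y⌋ q := by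
  rw [Int.fdiv_eq_ediv_of_nonneg _ hq.le]
  have hq' : (0:ℝ) < (q:ℝ) := by exact_mod_cast hq
  have hdm := Int.mul_ediv_add_emod ⌊y⌋ q
  have hm0 : 0 ≤ ⌊y⌋ % q := Int.emod_nonneg _ (ne_of_gt hq)
  have hm1 : ⌊y⌋ % q < q := Int.emod_lt_of_pos _ hq
  have hl : q * (⌊y⌋ / q) ≤ ⌊y⌋ := by omega
  have hu : ⌊y⌋ + 1 ≤ q * (⌊y⌋ / q + 1) := by nlinarith
  rw [Int.floor_eq_iff]
  constructor
  · rw [le_div_iff₀ hq']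
    have : ((q * (⌊y⌋ / q) : ℤ) : ℝ) ≤ (⌊y⌋ : ℝ) := by exact_mod_cast hl
    have hfl := Int.floor_le y
    push_cast at this ⊢
    nlinarith
  · rw [div_lt_iff₀ hq']
    have : ((⌊y⌋ + 1 : ℤ) : ℝ) ≤ ((q * (⌊y⌋ / q + 1) : ℤ) : ℝ) := by exact_mod_cast hu
    have hfl := Int.lt_floor_add_one y
    push_cast at this ⊢
    nlinarith

lemma cf_core (N r p q b p' : ℤ) (hirr : Irrational (Real.sqrt (N : ℝ)))
    (hr : r = ⌊Real.sqrt (N : ℝ)⌋)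
    (hred : CFRed N p q) (hb : b = Int.fdiv (r + p) q) (hp' : p' = b * q - p) :
    ⌊(Real.sqrt (N : ℝ) + (p : ℝ)) / (q : ℝ)⌋ = b ∧
      ⌊(Real.sqrt (N : ℝ) + (p' : ℝ)) / (q : ℝ)⌋ = b ∧ CFRed N p' q := by
  obtain ⟨hq, hdvd, hps, hspq, hqps⟩ := hred
  have hq' : (0:ℝ) < (q:ℝ) := by exact_mod_cast hq
  set s := Real.sqrt (N : ℝ) with hs
  have h1 : ⌊(s + (p:ℝ)) / (q:ℝ)⌋ = b := by
    rw [floor_div_int_eq_fdiv _ _ hq, Int.floor_add_intCast, hb, hr, Int.add_comm]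
  have hble : ((b:ℝ)) ≤ (s + p) / q := by rw [← h1]; exact Int.floor_le _
  have hblt : (s + p) / q < b + 1 := by
    rw [← h1]; exact Int.lt_floor_add_one _
  have h2 : (b:ℝ) * q ≤ s + p := by rw [le_div_iff₀ hq'] at hble; linarith
  have h3 : s + p < ((b:ℝ) + 1) * q := by rw [div_lt_iff₀ hq'] at hblt; linarith
  have hb1 : 1 ≤ b := by
    rw [← h1]
    apply Int.le_floor.mpr
    rw [le_div_iff₀ hq']
    push_cast
    linarith
  have hb1' : (1:ℝ) ≤ (b:ℝ) := by exact_mod_cast hb1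
  have hp's : (p':ℝ) < s := by
    have hne : s ≠ (p' : ℝ) := hirr.ne_int p'
    have hle : (p':ℝ) ≤ s := by
      rw [hp']; push_cast; linarith
    rcases hle.lt_or_eq with h | h
    · exact h
    · exact absurd h.symm hne
  have hsp'q : s < (p':ℝ) + q := by rw [hp']; push_cast; linarith
  have hqp' : (q:ℝ) - p' < s := by
    rw [hp']; push_cast
    have : ((1:ℝ) - b) * q ≤ 0 :=
      mul_nonpos_of_nonpos_of_nonneg (by linarith) hq'.le
    nlinarith
  have hdvd' : q ∣ N - p' ^ 2 := by
    have heq : N - p' ^ 2 = (N - p ^ 2) + (2 * b * p - b ^ 2 * q) * q := by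
      rw [hp']; ring
    rw [heq]
    exact dvd_add hdvd (dvd_mul_left q _)
  have h4 : ⌊(s + (p':ℝ)) / (q:ℝ)⌋ = b := by
    rw [Int.floor_eq_iff]
    constructor
    · rw [le_div_iff₀ hq', hp']; push_cast; linarith
    · rw [div_lt_iff₀ hq', hp']; push_cast; linarith
  exact ⟨h1, h4, hq, hdvd', hp's, hsp'q, hqp'⟩

lemma cf_flip (N p q q' : ℤ) (hN : 0 ≤ N) (hred : CFRed N p q)
    (h : q' * q = N - p ^ 2) : CFRed N p q' := by
  obtain ⟨hq, hdvd, hps, hspq, hqps⟩ := hred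
  have hq' : (0:ℝ) < (q:ℝ) := by exact_mod_cast hq
  set s := Real.sqrt (N : ℝ) with hs
  have hs2 : s ^ 2 = (N:ℝ) := Real.sq_sqrt (by exact_mod_cast hN)
  have hs0 : 0 ≤ s := Real.sqrt_nonneg _
  have hnp : -s < (p:ℝ) := by linarith
  have hsp0 : (0:ℝ) < s + p := by linarith
  have hNp2 : (0:ℝ) < (N:ℝ) - (p:ℝ) ^ 2 := by nlinarith
  have hNp2' : (0:ℤ) < N - p ^ 2 := by exact_mod_cast hNp2
  have hq'pos : 0 < q' := by nlinarith
  have hcast : (q':ℝ) * q = (N:ℝ) - (p:ℝ) ^ 2 := by exact_mod_cast congrArg (Int.cast : ℤ → ℝ) h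
  have hq'r : (0:ℝ) < (q':ℝ) := by exact_mod_cast hq'pos
  refine ⟨hq'pos, ⟨q, h.symm⟩, hps, ?_, ?_⟩
  · -- s < p + q'
    nlinarith [mul_pos hq'r (show (0:ℝ) < s + p - q by linarith)]
  · -- q' - p < s
    have hsp : (0:ℝ) < s - p := by linarith
    nlinarith [mul_pos hq'r (show (0:ℝ) < (p:ℝ) + q - s by linarith)]

/-- Two-sided continued fraction data of the normalized square root of `N`:
`N ≡ 1 (mod 4)` is positive and not a perfect square, `r = ⌊√N⌋`,
`P (-1) = r - 1` if `r` is even and `r` otherwise, `Q 0 = 2`, and the forward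
(`i ≥ 0`) and backward (`i ≤ -1`) recursions (with `Int.fdiv` the floor
division on `ℤ`, so that `Int.fdiv x y = ⌊x / y⌋`). -/
theorem stmt_5 (N : ℤ) (hNpos : 0 < N) (hN4 : N % 4 = 1) (hNsq : ¬ IsSquare N)
    (r : ℤ) (hr : r = ⌊Real.sqrt (N : ℝ)⌋)
    (P Q b : ℤ → ℤ)
    (hP1 : P (-1) = if 2 ∣ r then r - 1 else r)
    (hQ0 : Q 0 = 2)
    (hbf : ∀ i : ℤ, 0 ≤ i → b i = Int.fdiv (r + P (i - 1)) (Q i))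
    (hPf : ∀ i : ℤ, 0 ≤ i → P i = b i * Q i - P (i - 1))
    (hQf : ∀ i : ℤ, 0 ≤ i → Q (i + 1) = Int.fdiv (N - P i ^ 2) (Q i))
    (hQb : ∀ i : ℤ, i ≤ -1 → Q i = Int.fdiv (N - P i ^ 2) (Q (i + 1)))
    (hbb : ∀ i : ℤ, i ≤ -1 → b i = Int.fdiv (r + P i) (Q i))
    (hPb : ∀ i : ℤ, i ≤ -1 → P (i - 1) = b i * Q i - P i) :
    ∀ i : ℤ, ⌊(Real.sqrt (N : ℝ) + (P i : ℝ)) / (Q i : ℝ)⌋ = b i ∧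
      ⌊(Real.sqrt (N : ℝ) + (P (i - 1) : ℝ)) / (Q i : ℝ)⌋ = b i := by
  have hN0 : (0:ℤ) ≤ N := hNpos.le
  have hirr : Irrational (Real.sqrt (N : ℝ)) :=
    (irrational_sqrt_intCast_iff_of_nonneg hN0).mpr hNsq
  set s := Real.sqrt (N : ℝ) with hs
  have hs0 : 0 ≤ s := Real.sqrt_nonneg _
  have hs2 : s ^ 2 = (N:ℝ) := Real.sq_sqrt (by exact_mod_cast hN0)
  have hN1 : N ≠ 1 := fun h => hNsq (h ▸ ⟨1, rfl⟩)
  have hN5 : 5 ≤ N := by omega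
  have hsgt2 : (2:ℝ) < s := by nlinarith [show (5:ℝ) ≤ (N:ℝ) by exact_mod_cast hN5]
  have hr2 : 2 ≤ r := by
    rw [hr]; exact Int.le_floor.mpr (by exact_mod_cast hsgt2.le)
  have hrs : (r:ℝ) < s := by
    have h1 : (r:ℝ) ≤ s := by rw [hr]; exact Int.floor_le _
    rcases h1.lt_or_eq with h | h
    · exact h
    · exact absurd h.symm (hirr.ne_int r)
  have hsr1 : s < (r:ℝ) + 1 := by rw [hr]; exact Int.lt_floor_add_one _
  have hPlb : r - 1 ≤ P (-1) ∧ P (-1) ≤ r := by rw [hP1]; split <;> omega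
  -- base case
  have base : CFRed N (P (-1)) (Q 0) := by
    have hNo : Odd N := Int.odd_iff.mpr (by omega)
    have hpo : Odd (P (-1)) := by
      rw [hP1]; split
      · rename_i h; rw [Int.odd_iff]; omega
      · rename_i h; rw [Int.odd_iff]; omega
    have hpo2 : Odd (P (-1) ^ 2) := hpo.pow
    have heven : Even (N - P (-1) ^ 2) := hNo.sub_odd hpo2
    refine ⟨by rw [hQ0]; norm_num, ?_, ?_, ?_, ?_⟩
    · rw [hQ0]
      rcases heven with ⟨k, hk⟩
      exact ⟨k, by omega⟩
    · have : ((P (-1)):ℝ) ≤ (r:ℝ) := by exact_mod_cast hPlb.2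
      linarith
    · have : ((r:ℝ)) - 1 ≤ ((P (-1)):ℝ) := by exact_mod_cast hPlb.1
      have hQ : ((Q 0 : ℤ):ℝ) = 2 := by rw [hQ0]; norm_num
      rw [hQ]; linarith
    · have h1 : ((r:ℝ)) - 1 ≤ ((P (-1)):ℝ) := by exact_mod_cast hPlb.1
      have h2 : (2:ℝ) ≤ (r:ℝ) := by exact_mod_cast hr2
      have hQ : ((Q 0 : ℤ):ℝ) = 2 := by rw [hQ0]; norm_num
      rw [hQ]; linarith
  -- forward invariant
  have invF : ∀ n : ℕ, CFRed N (P ((n:ℤ) - 1)) (Q (n:ℤ)) := by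
    intro n
    induction n with
    | zero => simpa using base
    | succ n ih =>
      have h0 : (0:ℤ) ≤ (n:ℤ) := Int.natCast_nonneg n
      obtain ⟨_, _, hred'⟩ :=
        cf_core N r (P ((n:ℤ) - 1)) (Q (n:ℤ)) (b (n:ℤ)) (P (n:ℤ)) hirr hr ih
          (hbf (n:ℤ) h0) (hPf (n:ℤ) h0)
      have hmul : Q ((n:ℤ) + 1) * Q (n:ℤ) = N - P (n:ℤ) ^ 2 := by
        rw [hQf (n:ℤ) h0, Int.fdiv_eq_ediv_of_nonneg _ hred'.1.le, Int.ediv_mul_cancel hred'.2.1]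
      have : CFRed N (P (n:ℤ)) (Q ((n:ℤ) + 1)) := cf_flip N _ _ _ hN0 hred' hmul
      have hc : ((n + 1 : ℕ):ℤ) = (n:ℤ) + 1 := by push_cast; ring
      rw [hc, show (n:ℤ) + 1 - 1 = (n:ℤ) by ring]
      exact this
  -- backward invariant
  have invB : ∀ n : ℕ, CFRed N (P (-(n:ℤ) - 1)) (Q (-(n:ℤ))) := by
    intro n
    induction n with
    | zero => simpa using base
    | succ n ih =>
      set i : ℤ := -(n:ℤ) - 1 with hi
      have hile : i ≤ -1 := by omega
      have hi1 : i + 1 = -(n:ℤ) := by omega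
      have ih' : CFRed N (P i) (Q (i + 1)) := by rw [hi1]; exact ih
      have hmul : Q i * Q (i + 1) = N - P i ^ 2 := by
        rw [hQb i hile, Int.fdiv_eq_ediv_of_nonneg _ ih'.1.le, Int.ediv_mul_cancel ih'.2.1]
      have hredi : CFRed N (P i) (Q i) := cf_flip N _ _ _ hN0 ih' hmul
      obtain ⟨_, _, hred'⟩ :=
        cf_core N r (P i) (Q i) (b i) (P (i - 1)) hirr hr hredi (hbb i hile) (hPb i hile)
      have hc : -((n + 1 : ℕ):ℤ) = i := by push_cast; omega
      rw [hc]
      exact hred'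
  -- conclusion
  intro i
  rcases le_or_gt 0 i with hi | hi
  · have hiN : ((i.toNat : ℕ):ℤ) = i := Int.toNat_of_nonneg hi
    have hredF : CFRed N (P (i - 1)) (Q i) := by
      have := invF i.toNat
      rwa [hiN] at this
    obtain ⟨h1, h2, _⟩ :=
      cf_core N r (P (i - 1)) (Q i) (b i) (P i) hirr hr hredF (hbf i hi) (hPf i hi)
    exact ⟨h2, h1⟩
  · have hile : i ≤ -1 := by omega
    have hiN : -(((-i - 1).toNat : ℕ):ℤ) = i + 1 := by
      rw [Int.toNat_of_nonneg (by omega : (0:ℤ) ≤ -i - 1)]; ring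
    have ih' : CFRed N (P i) (Q (i + 1)) := by
      have := invB (-i - 1).toNat
      rw [hiN] at this
      rwa [show i + 1 - 1 = i by ring] at this
    have hmul : Q i * Q (i + 1) = N - P i ^ 2 := by
      rw [hQb i hile, Int.fdiv_eq_ediv_of_nonneg _ ih'.1.le, Int.ediv_mul_cancel ih'.2.1]
    have hredi : CFRed N (P i) (Q i) := cf_flip N _ _ _ hN0 ih' hmul
    obtain ⟨h1, h2, _⟩ :=
      cf_core N r (P i) (Q i) (b i) (P (i - 1)) hirr hr hredi (hbb i hile) (hPb i hile)
    exact ⟨h1, h2⟩
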